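/- Let (X,ρ,μ) be a space of homogeneous type with positive lower dimension d > 0 (i.e., (R/r)^d ≲ V(x,R)/V(x,r)). Then, for δ ∈ (0,1) small enough depending only on the structural constants, any system of dyadic cubes with scale parameter δ has the property that every cube R ∈ 𝒟_k is the union of at least two distinct cubes of 𝒟_{k+1}; in particular, each cube appears at exactly one level of the dyadic system. -/

import Mathlib

open Set MeasureTheory
open scoped ENNReal NNReal

/-- The (open) ball of a quasi-metric. -/
def qball {X : Type*} (ρ : X → X → ℝ) (x : X) (r : ℝ) : Set X := {y | ρ x y < r}

/-- A system of dyadic cubes on a quasi-metric measure space. -/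
structure DyadicSystem {X : Type*} [MeasurableSpace X] (ρ : X → X → ℝ) (δ c₀ C₀ : ℝ) where
  cubes : ℤ → Set (Set X)
  measurable : ∀ k, ∀ Q ∈ cubes k, MeasurableSet Q
  covers : ∀ k, ⋃₀ cubes k = Set.univ
  pairwiseDisjoint : ∀ k, (cubes k).PairwiseDisjoint id
  refines : ∀ k, ∀ Q ∈ cubes (k + 1), ∃ R ∈ cubes k, Q ⊆ R
  comparable : ∀ k, ∀ Q ∈ cubes k, ∃ z : X,
    qball ρ z (c₀ * δ ^ k) ⊆ Q ∧ Q ⊆ qball ρ z (C₀ * δ ^ k)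

lemma qball_mono {X : Type*} (ρ : X → X → ℝ) (x : X) {r s : ℝ} (h : r ≤ s) :
    qball ρ x r ⊆ qball ρ x s := fun _ hy => lt_of_lt_of_le hy h

lemma doub_iter {X : Type*} [MeasurableSpace X] (ρ : X → X → ℝ) (μ : Measure X) (C : ℝ≥0)
    (hC : ∀ x r, 0 < r → μ (qball ρ x (2 * r)) ≤ C * μ (qball ρ x r)) :
    ∀ (n : ℕ) (x : X) (r : ℝ), 0 < r →
      μ (qball ρ x (2 ^ n * r)) ≤ (C : ℝ≥0∞) ^ n * μ (qball ρ x r) := by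
  intro n
  induction n with
  | zero => intro x r hr; simp
  | succ n ih =>
    intro x r hr
    have h1 : (2 : ℝ) ^ (n + 1) * r = 2 * (2 ^ n * r) := by ring
    calc μ (qball ρ x (2 ^ (n + 1) * r)) = μ (qball ρ x (2 * (2 ^ n * r))) := by rw [h1]
      _ ≤ C * μ (qball ρ x (2 ^ n * r)) := hC x _ (by positivity)
      _ ≤ C * ((C : ℝ≥0∞) ^ n * μ (qball ρ x r)) := by gcongr; exact ih x r hr
      _ = (C : ℝ≥0∞) ^ (n + 1) * μ (qball ρ x r) := by ring

lemma DyadicSystem.ancestor {X : Type*} [MeasurableSpace X] {ρ : X → X → ℝ} {δ c₀ C₀ : ℝ}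
    (𝒟 : DyadicSystem ρ δ c₀ C₀) :
    ∀ (n : ℕ) (m : ℤ), ∀ Q ∈ 𝒟.cubes (m + n), ∃ R ∈ 𝒟.cubes m, Q ⊆ R := by
  intro n
  induction n with
  | zero => intro m Q hQ; exact ⟨Q, by simpa using hQ, subset_rfl⟩
  | succ n ih =>
    intro m Q hQ
    have hQ' : Q ∈ 𝒟.cubes ((m + 1) + n) := by
      have : m + ((n : ℕ) + 1 : ℕ) = (m + 1) + n := by push_cast; ring
      rwa [this] at hQ
    obtain ⟨R, hR, hQR⟩ := ih (m + 1) Q hQ'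
    obtain ⟨S, hS, hRS⟩ := 𝒟.refines m R hR
    exact ⟨S, hS, hQR.trans hRS⟩

/-- On a space of homogeneous type of positive lower dimension `d > 0`, for `δ` small enough
(depending only on the structural constants), every cube of a dyadic system with scale
parameter `δ` has at least two distinct dyadic children; in particular each cube appears at
exactly one level. -/
theorem dyadic_unique_level_of_lower_dim {X : Type*} [MeasurableSpace X]
    (ρ : X → X → ℝ) (μ : Measure X)
    (A₀ : ℝ) (hA₀ : 1 ≤ A₀)
    (hρ0 : ∀ x y, 0 ≤ ρ x y) (hρeq : ∀ x y, ρ x y = 0 ↔ x = y)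
    (hρsymm : ∀ x y, ρ x y = ρ y x)
    (hρtri : ∀ x y z, ρ x y ≤ A₀ * (ρ x z + ρ z y))
    (hdoub : ∃ Cd : ℝ≥0, ∀ x r, 0 < r → μ (qball ρ x (2 * r)) ≤ Cd * μ (qball ρ x r))
    (hpos : ∀ x r, 0 < r → 0 < μ (qball ρ x r))
    (hfin : ∀ x r, 0 < r → μ (qball ρ x r) < ⊤)
    (d : ℝ) (hd : 0 < d) (cl : ℝ) (hcl : 0 < cl)
    (hlow : ∀ x r R, 0 < r → r ≤ R →
      ENNReal.ofReal (cl * (R / r) ^ d) * μ (qball ρ x r) ≤ μ (qball ρ x R))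
    (c₀ C₀ : ℝ) (hc₀ : 0 < c₀) (hC₀ : c₀ ≤ C₀) :
    ∃ δ₀ : ℝ, 0 < δ₀ ∧ δ₀ < 1 ∧ ∀ δ : ℝ, 0 < δ → δ ≤ δ₀ →
      ∀ 𝒟 : DyadicSystem ρ δ c₀ C₀,
        (∀ k, ∀ R ∈ 𝒟.cubes k, ∃ Q₁ ∈ 𝒟.cubes (k + 1), ∃ Q₂ ∈ 𝒟.cubes (k + 1),
          Q₁ ≠ Q₂ ∧ Q₁ ⊆ R ∧ Q₂ ⊆ R) ∧
        (∀ Q k k', Q ∈ 𝒟.cubes k → Q ∈ 𝒟.cubes k' → k = k') := by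
  obtain ⟨Cd, hCd⟩ := hdoub
  set C : ℝ≥0 := max Cd 1 with hCdef
  have hC : ∀ x r, 0 < r → μ (qball ρ x (2 * r)) ≤ C * μ (qball ρ x r) := by
    intro x r hr
    refine (hCd x r hr).trans ?_
    gcongr
    exact_mod_cast le_max_left Cd 1
  have hC1 : (1 : ℝ) ≤ (C : ℝ) := by exact_mod_cast le_max_right Cd 1
  -- choose N with 2 * A₀ * C₀ ≤ 2 ^ N * c₀
  obtain ⟨N, hN⟩ : ∃ N : ℕ, 2 * A₀ * C₀ / c₀ < 2 ^ N :=
    pow_unbounded_of_one_lt (2 * A₀ * C₀ / c₀) one_lt_two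
  have hNc : 2 * A₀ * C₀ ≤ 2 ^ N * c₀ := by
    rw [div_lt_iff₀ hc₀] at hN
    linarith
  set M : ℝ := (C : ℝ) ^ N with hMdef
  have hM1 : (1 : ℝ) ≤ M := one_le_pow₀ hC1
  have hM0 : 0 < M := lt_of_lt_of_le one_pos hM1
  refine ⟨min (1 / 2) ((cl / (2 * M)) ^ (1 / d)), ?_, ?_, ?_⟩
  · exact lt_min (by norm_num) (Real.rpow_pos_of_pos (by positivity) _)
  · exact lt_of_le_of_lt (min_le_left _ _) (by norm_num)
  intro δ hδ hδle 𝒟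
  have hδ1 : δ < 1 := lt_of_le_of_lt (hδle.trans (min_le_left _ _)) (by norm_num)
  -- the key smallness : M * δ ^ d < cl
  have hδd : M * δ ^ d < cl := by
    have h1 : δ ^ d ≤ ((cl / (2 * M)) ^ (1 / d)) ^ d :=
      Real.rpow_le_rpow hδ.le (hδle.trans (min_le_right _ _)) hd.le
    have h2 : ((cl / (2 * M)) ^ (1 / d)) ^ d = cl / (2 * M) := by
      rw [← Real.rpow_mul (by positivity), one_div_mul_cancel hd.ne', Real.rpow_one]
    have h3 := mul_le_mul_of_nonneg_left (h1.trans_eq h2) hM0.le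
    have h4 : M * (cl / (2 * M)) = cl / 2 := by field_simp
    rw [h4] at h3
    linarith
  -- strict measure decrease from child to parent
  have key : ∀ k : ℤ, ∀ Q ∈ 𝒟.cubes (k + 1), ∀ R ∈ 𝒟.cubes k, Q ⊆ R → μ Q < μ R := by
    intro k Q hQ R hR hQR
    obtain ⟨zQ, hzQ1, hzQ2⟩ := 𝒟.comparable (k + 1) Q hQ
    obtain ⟨zR, hzR1, hzR2⟩ := 𝒟.comparable k R hR
    have hδk : (0 : ℝ) < δ ^ k := zpow_pos hδ k
    have hδk1 : (0 : ℝ) < δ ^ (k + 1) := zpow_pos hδ (k + 1)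
    have hzQQ : zQ ∈ Q := hzQ1 (show ρ zQ zQ < c₀ * δ ^ (k + 1) by
      rw [(hρeq zQ zQ).mpr rfl]; exact mul_pos hc₀ hδk1)
    have hzQR : ρ zR zQ < C₀ * δ ^ k := hzR2 (hQR hzQQ)
    -- chain of inequalities
    set a : ℝ≥0∞ := ENNReal.ofReal (cl * δ⁻¹ ^ d) with hadef
    have step1 : a * μ (qball ρ zQ (C₀ * δ ^ (k + 1))) ≤ μ (qball ρ zQ (C₀ * δ ^ k)) := by
      have hr : (0 : ℝ) < C₀ * δ ^ (k + 1) := mul_pos (hc₀.trans_le hC₀) hδk1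
      have hrR : C₀ * δ ^ (k + 1) ≤ C₀ * δ ^ k := by
        have : δ ^ (k + 1) ≤ δ ^ k := by
          rw [zpow_add_one₀ hδ.ne']
          nlinarith
        nlinarith [hc₀.trans_le hC₀]
      have := hlow zQ (C₀ * δ ^ (k + 1)) (C₀ * δ ^ k) hr hrR
      have hratio : C₀ * δ ^ k / (C₀ * δ ^ (k + 1)) = δ⁻¹ := by
        have hC₀0 : C₀ ≠ 0 := (hc₀.trans_le hC₀).ne'
        rw [zpow_add_one₀ hδ.ne']
        rw [eq_comm, inv_eq_iff_eq_inv, inv_div]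
        field_simp [hδ.ne', hδk.ne', hC₀0]
      rwa [hratio] at this
    have step2 : μ (qball ρ zQ (C₀ * δ ^ k)) ≤ μ (qball ρ zR (2 ^ N * (c₀ * δ ^ k))) := by
      apply measure_mono
      intro y hy
      have h1 : ρ zR y ≤ A₀ * (ρ zR zQ + ρ zQ y) := hρtri zR y zQ
      have h2 : ρ zQ y < C₀ * δ ^ k := hy
      have h3 : ρ zR y < 2 * A₀ * C₀ * δ ^ k := by nlinarith
      have h4 : 2 * A₀ * C₀ * δ ^ k ≤ 2 ^ N * (c₀ * δ ^ k) := by nlinarith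
      exact lt_of_lt_of_le h3 h4
    have step3 : μ (qball ρ zR (2 ^ N * (c₀ * δ ^ k))) ≤ (C : ℝ≥0∞) ^ N * μ (qball ρ zR (c₀ * δ ^ k)) :=
      doub_iter ρ μ C hC N zR (c₀ * δ ^ k) (mul_pos hc₀ hδk)
    have step4 : μ (qball ρ zR (c₀ * δ ^ k)) ≤ μ R := measure_mono hzR1
    have main : a * μ Q ≤ (C : ℝ≥0∞) ^ N * μ R := by
      calc a * μ Q ≤ a * μ (qball ρ zQ (C₀ * δ ^ (k + 1))) :=
            mul_le_mul_right (measure_mono hzQ2) a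
        _ ≤ μ (qball ρ zQ (C₀ * δ ^ k)) := step1
        _ ≤ μ (qball ρ zR (2 ^ N * (c₀ * δ ^ k))) := step2
        _ ≤ (C : ℝ≥0∞) ^ N * μ (qball ρ zR (c₀ * δ ^ k)) := step3
        _ ≤ (C : ℝ≥0∞) ^ N * μ R := by gcongr
    have hδdpos : 0 < δ ^ d := Real.rpow_pos_of_pos hδ d
    have h5 : M < cl * δ⁻¹ ^ d := by
      rw [Real.inv_rpow hδ.le, ← div_eq_mul_inv, lt_div_iff₀ hδdpos]
      exact hδd
    have h5pos : 0 < cl * δ⁻¹ ^ d := lt_trans hM0 h5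
    have hba : ((C : ℝ≥0∞)) ^ N < a := by
      calc ((C : ℝ≥0∞)) ^ N = ENNReal.ofReal M := by
            rw [hMdef, ENNReal.ofReal_pow C.coe_nonneg, ENNReal.ofReal_coe_nnreal]
        _ < a := (ENNReal.ofReal_lt_ofReal_iff h5pos).mpr h5
    have hμR0 : 0 < μ R := lt_of_lt_of_le (hpos zR (c₀ * δ ^ k) (mul_pos hc₀ hδk)) step4
    have hμRfin : μ R < ⊤ := lt_of_le_of_lt (measure_mono hzR2)
      (hfin zR (C₀ * δ ^ k) (mul_pos (hc₀.trans_le hC₀) hδk))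
    by_contra hcon
    push_neg at hcon
    have : a * μ R ≤ (C : ℝ≥0∞) ^ N * μ R :=
      le_trans (by gcongr) main
    have : a ≤ (C : ℝ≥0∞) ^ N :=
      (ENNReal.mul_le_mul_iff_left hμR0.ne' hμRfin.ne).mp this
    exact absurd this (not_le.mpr hba)
  -- nonemptiness of cubes and the "child containing a point" fact
  have child : ∀ k : ℤ, ∀ R ∈ 𝒟.cubes k, ∀ x ∈ R, ∃ Q ∈ 𝒟.cubes (k + 1), x ∈ Q ∧ Q ⊆ R := by
    intro k R hR x hx
    have hxU : x ∈ ⋃₀ 𝒟.cubes (k + 1) := by rw [𝒟.covers]; trivial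
    obtain ⟨Q, hQ, hxQ⟩ := hxU
    obtain ⟨R', hR', hQR'⟩ := 𝒟.refines k Q hQ
    have hRR' : R' = R := by
      by_contra hne
      exact (𝒟.pairwiseDisjoint k hR' hR hne).le_bot ⟨hQR' hxQ, hx⟩
    exact ⟨Q, hQ, hxQ, hRR' ▸ hQR'⟩
  constructor
  · intro k R hR
    obtain ⟨zR, hzR1, hzR2⟩ := 𝒟.comparable k R hR
    have hδk : (0 : ℝ) < δ ^ k := zpow_pos hδ k
    have hzRR : zR ∈ R := hzR1 (show ρ zR zR < c₀ * δ ^ k by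
      rw [(hρeq zR zR).mpr rfl]; exact mul_pos hc₀ hδk)
    obtain ⟨Q₁, hQ₁, hzQ₁, hQ₁R⟩ := child k R hR zR hzRR
    have hne : ¬ R ⊆ Q₁ := by
      intro hsub
      have : Q₁ = R := le_antisymm hQ₁R hsub
      exact absurd (key k Q₁ hQ₁ R hR hQ₁R) (by rw [this]; exact lt_irrefl _)
    obtain ⟨y, hyR, hyQ₁⟩ := not_subset.mp hne
    obtain ⟨Q₂, hQ₂, hyQ₂, hQ₂R⟩ := child k R hR y hyR
    exact ⟨Q₁, hQ₁, Q₂, hQ₂, fun h => hyQ₁ (h ▸ hyQ₂), hQ₁R, hQ₂R⟩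
  · -- unique level
    have main : ∀ Q : Set X, ∀ k k' : ℤ, k < k' → Q ∈ 𝒟.cubes k → Q ∈ 𝒟.cubes k' → False := by
      intro Q k k' hkk' hQk hQk'
      obtain ⟨zQ, hzQ1, _⟩ := 𝒟.comparable k Q hQk
      have hδk : (0 : ℝ) < δ ^ k := zpow_pos hδ k
      have hzQQ : zQ ∈ Q := hzQ1 (show ρ zQ zQ < c₀ * δ ^ k by
        rw [(hρeq zQ zQ).mpr rfl]; exact mul_pos hc₀ hδk)
      have hk' : k' = (k + 1) + ((k' - k - 1).toNat : ℤ) := by omega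
      obtain ⟨R, hR, hQR⟩ := 𝒟.ancestor (k' - k - 1).toNat (k + 1) Q (hk' ▸ hQk')
      obtain ⟨S, hS, hRS⟩ := 𝒟.refines k R hR
      have hQS : Q = S := by
        by_contra hne
        exact (𝒟.pairwiseDisjoint k hQk hS hne).le_bot ⟨hzQQ, hRS (hQR hzQQ)⟩
      have hRQ : R = Q := le_antisymm (hQS ▸ hRS) hQR
      exact absurd (key k R hR Q hQk (hRQ.le)) (by rw [hRQ]; exact lt_irrefl _)
    intro Q k k' hk hk'
    rcases lt_trichotomy k k' with h | h | h
    · exact absurd (main Q k k' h hk hk') id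
    · exact h
    · exact absurd (main Q k' k h hk' hk) id
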